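/- Let K = W(k)[1/p] for k algebraically closed of characteristic p, and let V = K^r with the semilinear operator F(x_1,…,x_r) = (φ(x_2),…,φ(x_r), p^s φ(x_1)) where gcd(r,s)=1, r>0. If there exists a nonzero x ∈ V with F(x) = p^i x for some integer i, then r = 1 and s = i. -/
import Mathlib


/-- Let `K = W(k)[1/p]` (abstracted here as a field `K` equipped with a Frobenius automorphism
`φ` preserving the `p`-adic valuation `v`, with `v p = 1`), and `V = K^r` with the semilinear
operator `F(x_1,…,x_r) = (φ(x_2),…,φ(x_r), p^s φ(x_1))`, where `gcd(r,s) = 1`, `r > 0`.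
If some nonzero `x` satisfies `F x = p^i • x`, then `r = 1` and `s = i`. -/
theorem stmt_2 (p : ℕ) [Fact p.Prime] (K : Type*) [Field K]
    (φ : K ≃+* K) (v : K → ℤ)
    (hp0 : (p : K) ≠ 0)
    (hv_mul : ∀ x y : K, x ≠ 0 → y ≠ 0 → v (x * y) = v x + v y)
    (hv_p : v ((p : K)) = 1)
    (hv_phi : ∀ x : K, x ≠ 0 → v (φ x) = v x)
    (r : ℕ) (s i : ℤ) (hr : 0 < r) (hcop : IsCoprime (r : ℤ) s)
    (x : Fin r → K) (hx : x ≠ 0)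
    (hFx : ∀ j : Fin r,
      (if h : (j : ℕ) + 1 < r then φ (x ⟨(j : ℕ) + 1, h⟩)
        else (p : K) ^ s * φ (x ⟨0, hr⟩)) = (p : K) ^ i * x j) :
    r = 1 ∧ s = i := by
  -- basic valuation facts
  have hv1 : v 1 = 0 := by
    have h := hv_mul 1 1 one_ne_zero one_ne_zero
    rw [one_mul] at h; linarith
  have hv_pown : ∀ (n : ℕ) (y : K), y ≠ 0 → v (y ^ n) = n * v y := by
    intro n y hy
    induction n with
    | zero => simpa using hv1
    | succ n ih =>
      rw [pow_succ, hv_mul _ _ (pow_ne_zero n hy) hy, ih]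
      push_cast; ring
  have hv_inv : ∀ y : K, y ≠ 0 → v y⁻¹ = - v y := by
    intro y hy
    have h := hv_mul y y⁻¹ hy (inv_ne_zero hy)
    rw [mul_inv_cancel₀ hy, hv1] at h; linarith
  have hv_zpow : ∀ m : ℤ, v ((p : K) ^ m) = m := by
    intro m
    cases m with
    | ofNat n => rw [Int.ofNat_eq_coe, zpow_natCast, hv_pown n _ hp0, hv_p]; ring
    | negSucc n =>
      rw [zpow_negSucc, hv_inv _ (pow_ne_zero _ hp0), hv_pown _ _ hp0, hv_p]
      simp [Int.negSucc_eq]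
  have hphi0 : ∀ y : K, φ y = 0 → y = 0 := by
    intro y hy
    exact φ.injective (by rw [hy, map_zero])
  -- if x₀ = 0 then everything is zero
  have hzero : x ⟨0, hr⟩ = 0 → ∀ (k : ℕ) (hk : k < r), x ⟨k, hk⟩ = 0 := by
    intro h0 k
    induction k with
    | zero => intro hk; exact h0
    | succ k ih =>
      intro hk
      have hk' : k < r := Nat.lt_of_succ_lt hk
      have heq := hFx ⟨k, hk'⟩
      simp only [Fin.val_mk] at heq
      rw [dif_pos hk] at heq
      rw [ih hk', mul_zero] at heq
      exact hphi0 _ heq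
  have hx0 : x ⟨0, hr⟩ ≠ 0 := by
    intro h0
    apply hx
    funext j
    have := hzero h0 j.1 j.2
    simpa using this
  have hpi : (p : K) ^ i ≠ 0 := zpow_ne_zero _ hp0
  -- all coordinates nonzero
  have hnz : ∀ (k : ℕ) (hk : k < r), x ⟨k, hk⟩ ≠ 0 := by
    intro k
    induction k with
    | zero => intro hk; exact hx0
    | succ k ih =>
      intro hk
      have hk' : k < r := Nat.lt_of_succ_lt hk
      have heq := hFx ⟨k, hk'⟩
      simp only [Fin.val_mk] at heq
      rw [dif_pos hk] at heq
      intro h0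
      rw [h0, map_zero] at heq
      exact ih hk' (by
        rcases mul_eq_zero.mp heq.symm with h | h
        · exact absurd h hpi
        · exact h)
  -- valuation recurrence
  have hval : ∀ (k : ℕ) (hk : k < r), v (x ⟨k, hk⟩) = v (x ⟨0, hr⟩) + k * i := by
    intro k
    induction k with
    | zero => intro hk; simp
    | succ k ih =>
      intro hk
      have hk' : k < r := Nat.lt_of_succ_lt hk
      have heq := hFx ⟨k, hk'⟩
      simp only [Fin.val_mk] at heq
      rw [dif_pos hk] at heq
      have h1 : v (φ (x ⟨k + 1, hk⟩)) = v (x ⟨k + 1, hk⟩) := hv_phi _ (hnz _ hk)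
      have h2 : v ((p : K) ^ i * x ⟨k, hk'⟩) = i + v (x ⟨k, hk'⟩) := by
        rw [hv_mul _ _ hpi (hnz _ hk'), hv_zpow]
      rw [heq, h2, ih hk'] at h1
      rw [← h1]; push_cast; ring
  -- last equation
  have hrm : r - 1 < r := Nat.sub_lt hr one_pos
  have heq := hFx ⟨r - 1, hrm⟩
  simp only [Fin.val_mk] at heq
  rw [dif_neg (by omega)] at heq
  have hv_l : v ((p : K) ^ s * φ (x ⟨0, hr⟩)) = s + v (x ⟨0, hr⟩) := by
    rw [hv_mul _ _ (zpow_ne_zero _ hp0) (by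
      intro h0; exact hx0 (hphi0 _ h0)), hv_zpow, hv_phi _ hx0]
  have hv_r : v ((p : K) ^ i * x ⟨r - 1, hrm⟩) = i + (v (x ⟨0, hr⟩) + (r - 1 : ℕ) * i) := by
    rw [hv_mul _ _ hpi (hnz _ hrm), hv_zpow, hval _ hrm]
  rw [heq, hv_r] at hv_l
  have hcast : ((r - 1 : ℕ) : ℤ) = (r : ℤ) - 1 := by
    have : 1 ≤ r := hr
    omega
  rw [hcast] at hv_l
  have hs : s = (r : ℤ) * i := by linarith [hv_l]
  have hunit : IsUnit (r : ℤ) := hcop.isUnit_of_dvd' dvd_rfl ⟨i, hs⟩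
  have hr1 : (r : ℤ) = 1 := by
    rcases Int.isUnit_iff.mp hunit with h | h
    · exact h
    · omega
  have hr1' : r = 1 := by exact_mod_cast hr1
  exact ⟨hr1', by rw [hs, hr1, one_mul]⟩
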